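/- Let R be an integral domain which is a ℚ-algebra, let α ∈ R, let f ∈ R⟦X⟧, and set E_α := rescale α exp (the series e^{αX}). Let Δg denote the sequence (δ^j g)_{j≥0} of iterated formal derivatives of g ∈ R⟦X⟧. Then for every n ≥ 1, applying the autonomous polynomials over the commutative ring R⟦X⟧: A_n(Δ(E_α · f)) = E_α^n · A_n(F), where F : ℕ → R⟦X⟧ is the sequence F(j) = ∑_{i=0}^{j} (j choose i) · α^{j−i} · δ^i f. -/

import Mathlib

/-- Binomial (Hurwitz) convolution of sequences: `(y ⊛ z)(n) = ∑ (n choose k) y(k) z(n-k)`. -/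
def hconv {R : Type*} [CommRing R] (y z : ℕ → R) : ℕ → R :=
  fun n => ∑ k ∈ Finset.range (n + 1), (n.choose k : R) * y k * z (n - k)

/-- `DSeq x m` is `D_{m+1}(x)`, where `D_1(x) = x` and `D_{m+1}(x) = x ⊛ σ(D_m(x))`. -/
def DSeq {R : Type*} [CommRing R] (x : ℕ → R) : ℕ → ℕ → R
  | 0 => x
  | m + 1 => hconv x (fun j => DSeq x m (j + 1))

/-- `autPoly x n` is the `n`-th autonomous polynomial `A_n(x) = D_n(x)(0)`, meaningful for
`n ≥ 1`. -/
def autPoly {R : Type*} [CommRing R] (x : ℕ → R) (n : ℕ) : R := DSeq x (n - 1) 0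

/-- The autonomous operator `𝔄(x)(n) = A_{n+1}(x)`. -/
def autOp {R : Type*} [CommRing R] (x : ℕ → R) (n : ℕ) : R := autPoly x (n + 1)

open PowerSeries

section Aux

variable {R : Type*} [CommRing R] [Algebra ℚ R]

lemma deriv_E (α : R) :
    derivativeFun (rescale α (exp R)) = C α * rescale α (exp R) := by
  ext n
  rw [show derivativeFun (rescale α (exp R)) = d⁄dX R (rescale α (exp R)) from rfl,
    coeff_derivativeFun, coeff_rescale, coeff_exp, coeff_C_mul, coeff_rescale, coeff_exp,
    pow_succ]
  have h : ((n : R) + 1) = algebraMap ℚ R ((n : ℚ) + 1) := by push_cast; simp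
  rw [h, mul_assoc, ← map_mul]
  ring_nf
  congr 2
  rw [add_comm 1 n, Nat.factorial_succ]
  have hn : ((n.factorial : ℚ)) ≠ 0 := by positivity
  have hn1 : (((n+1 : ℕ) : ℚ)) ≠ 0 := by positivity
  push_cast
  field_simp
  ring

omit [Algebra ℚ R] in
lemma deriv_C_mul (a : R) (g : R⟦X⟧) :
    derivativeFun (C a * g) = C a * derivativeFun g := by
  rw [derivativeFun_mul, show derivativeFun (C a) = d⁄dX R (C a) from rfl, derivativeFun_C, smul_zero, add_zero, smul_eq_mul]

omit [Algebra ℚ R] in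
lemma derivFun_sum {ι : Type*} (s : Finset ι) (g : ι → R⟦X⟧) :
    derivativeFun (∑ i ∈ s, g i) = ∑ i ∈ s, derivativeFun (g i) :=
  map_sum (d⁄dX R) g s

lemma iter_deriv_E_mul (α : R) (f : R⟦X⟧) (F : ℕ → R⟦X⟧)
    (hF : ∀ j : ℕ, F j = ∑ i ∈ Finset.range (j + 1),
      (j.choose i : R⟦X⟧) * PowerSeries.C (α ^ (j - i)) * derivativeFun^[i] f) :
    ∀ j : ℕ, derivativeFun^[j] (rescale α (exp R) * f) = rescale α (exp R) * F j := by
  have hF' : ∀ j : ℕ, F j = ∑ i ∈ Finset.range (j + 1),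
      (j.choose i : R⟦X⟧) * (C (α ^ (j - i)) * derivativeFun^[i] f) := by
    intro j; rw [hF j]; simp [mul_assoc]
  intro j
  induction j with
  | zero => simp [hF' 0]
  | succ j ih =>
    rw [Function.iterate_succ_apply', ih, derivativeFun_mul, deriv_E, smul_eq_mul, smul_eq_mul]
    have key : C α * F j + derivativeFun (F j) = F (j + 1) := by
      have hd : derivativeFun (F j) = ∑ i ∈ Finset.range (j + 1),
          (j.choose i : R⟦X⟧) * (C (α ^ (j - i)) * derivativeFun^[i + 1] f) := by
        rw [hF' j, derivFun_sum]
        refine Finset.sum_congr rfl fun i hi => ?_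
        rw [(map_natCast (C (R := R)) (j.choose i)).symm,
          ← mul_assoc, ← map_mul, deriv_C_mul, map_mul, Function.iterate_succ_apply']
        ring
      have hc : C α * F j = ∑ i ∈ Finset.range (j + 1),
          (j.choose i : R⟦X⟧) * (C (α ^ (j + 1 - i)) * derivativeFun^[i] f) := by
        rw [hF' j, Finset.mul_sum]
        refine Finset.sum_congr rfl fun i hi => ?_
        have : j + 1 - i = (j - i) + 1 := by
          have := Finset.mem_range.mp hi; omega
        rw [this, pow_succ, map_mul]; ring
      rw [hd, hc, hF' (j + 1),
        Finset.sum_choose_succ_mul (fun i k => C (α ^ k) * derivativeFun^[i] f) j]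
    rw [← key]
    ring

omit [Algebra ℚ R] in
lemma DSeq_mul (g : R⟦X⟧) (y : ℕ → R⟦X⟧) :
    ∀ m j : ℕ, DSeq (fun j => g * y j) m j = g ^ (m + 1) * DSeq y m j := by
  intro m
  induction m with
  | zero => intro j; simp [DSeq, pow_one]
  | succ m ih =>
    intro j
    simp only [DSeq, hconv, Finset.mul_sum]
    refine Finset.sum_congr rfl fun k hk => ?_
    rw [ih (j - k + 1)]
    ring

end Aux

/-- Let `R` be an integral domain which is a `ℚ`-algebra, `α ∈ R`, `f ∈ R⟦X⟧`, and
`E_α = rescale α exp` (the series `e^{αX}`). Applying the autonomous polynomials over the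
commutative ring `R⟦X⟧` to the sequence of iterated derivatives `Δ(E_α·f)`, one has for every
`n ≥ 1`: `A_n(Δ(E_α·f)) = E_α^n · A_n(F)` where `F(j) = ∑_{i≤j} (j choose i) α^{j-i} δ^i f`. -/
theorem autPoly_exp_mul {R : Type*} [CommRing R] [IsDomain R] [Algebra ℚ R]
    (α : R) (f : R⟦X⟧) (F : ℕ → R⟦X⟧)
    (hF : ∀ j : ℕ, F j = ∑ i ∈ Finset.range (j + 1),
      (j.choose i : R⟦X⟧) * PowerSeries.C (α ^ (j - i)) * derivativeFun^[i] f) :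
    ∀ n : ℕ, 1 ≤ n →
      autPoly (fun j => derivativeFun^[j] (rescale α (exp R) * f)) n =
        (rescale α (exp R)) ^ n * autPoly F n := by
  intro n hn
  have hx : (fun j => derivativeFun^[j] (rescale α (exp R) * f)) =
      fun j => rescale α (exp R) * F j := by
    funext j; exact iter_deriv_E_mul α f F hF j
  rw [autPoly, autPoly, hx, DSeq_mul, Nat.sub_add_cancel hn]
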